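/- Let m : X^ℝ → C(W,ℝ) be a minimal sequence measure function. Then the range of m is uniformly dense in C(W,ℝ): for every real-valued continuous function f on W and every ε > 0 there exists x ∈ X^ℝ such that sup_{w∈W} |m(x)(w) − f(w)| < ε. -/

import Mathlib

open Filter Topology

noncomputable section

/-- Frame-compatible sequence (index `n : ℕ` corresponds to the paper's `n+1`). -/
def FrameCompatible {ι : Type*} (In : ℕ → Finset ι) (x : ℕ → ℝ) : Prop :=
  (0 ≤ x 0 ∧ x 0 ≤ ((In 0).card : ℝ)) ∧
  ∀ n : ℕ, 0 ≤ x (n + 1) - x n ∧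
    x (n + 1) - x n ≤ ((In (n + 1)).card : ℝ) - ((In n).card : ℝ)

/-- `X`: the set of frame compatible sequences. -/
def Xset {ι : Type*} (In : ℕ → Finset ι) : Set (ℕ → ℝ) :=
  {x | FrameCompatible In x}

/-- `X⁺ = {c • x : x ∈ X, c ≥ 0}`. -/
def Xplus {ι : Type*} (In : ℕ → Finset ι) : Set (ℕ → ℝ) :=
  {y | ∃ c : ℝ, 0 ≤ c ∧ ∃ x ∈ Xset In, y = c • x}

/-- `X^ℝ = {x − y : x, y ∈ X⁺}`. -/
def XR {ι : Type*} (In : ℕ → Finset ι) : Set (ℕ → ℝ) :=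
  {z | ∃ x ∈ Xplus In, ∃ y ∈ Xplus In, z = x - y}

/-- `x ≈ y` : `(xₙ − yₙ)/|Iₙ| → 0`. -/
def SeqApprox {ι : Type*} (In : ℕ → Finset ι) (x y : ℕ → ℝ) : Prop :=
  Tendsto (fun n => (x n - y n) / ((In n).card : ℝ)) atTop (nhds 0)

/-- `y ⪬ x` : `liminf (xₙ − yₙ)/|Iₙ| ≥ 0`. -/
def SeqLeq {ι : Type*} (In : ℕ → Finset ι) (y x : ℕ → ℝ) : Prop :=
  0 ≤ atTop.liminf fun n => (x n - y n) / ((In n).card : ℝ)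

/-- A sequence measure function (modelled as a total map `(ℕ → ℝ) → C(W, ℝ)`,
constrained only on `X^ℝ`, its mathematical domain):
(1) for `x, y ∈ X^ℝ`, `m x = m y ↔ x ≈ y`;
(2) for `x, y ∈ X⁺`, `m x ≤ m y` pointwise iff `x ⪬ y`;
(3) `m i = 1` where `i = (|Iₙ|)ₙ`;
(4) `m` is linear (additive and homogeneous) on `X^ℝ`. -/
def IsSeqMF {ι : Type*} (In : ℕ → Finset ι) {W : Type*} [TopologicalSpace W]
    (m : (ℕ → ℝ) → C(W, ℝ)) : Prop :=
  (∀ x ∈ XR In, ∀ y ∈ XR In, (m x = m y ↔ SeqApprox In x y)) ∧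
  (∀ x ∈ Xplus In, ∀ y ∈ Xplus In, ((∀ w : W, m x w ≤ m y w) ↔ SeqLeq In x y)) ∧
  (m (fun n => ((In n).card : ℝ)) = 1) ∧
  (∀ x ∈ XR In, ∀ y ∈ XR In, m (x + y) = m x + m y) ∧
  (∀ x ∈ XR In, ∀ c : ℝ, m (c • x) = c • m x)

/-- A sequence measure function is separable if the functions `m x` separate
the points of `W`. -/
def SMFSeparable {ι : Type*} (In : ℕ → Finset ι) {W : Type*} [TopologicalSpace W]
    (m : (ℕ → ℝ) → C(W, ℝ)) : Prop :=
  ∀ v w : W, v ≠ w → ∃ x ∈ XR In, m x v ≠ m x w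

/-- A sequence measure function is reducible if its restriction to some proper compact
subset `V ⊊ W` is again a sequence measure function. -/
def SMFReducible {ι : Type*} (In : ℕ → Finset ι) {W : Type*} [TopologicalSpace W]
    (m : (ℕ → ℝ) → C(W, ℝ)) : Prop :=
  ∃ V : Set W, IsCompact V ∧ V ≠ Set.univ ∧
    IsSeqMF In (fun x => (m x).restrict V)

/-- A sequence measure function is minimal if it is separable and irreducible. -/
def SMFMinimal {ι : Type*} (In : ℕ → Finset ι) {W : Type*} [TopologicalSpace W]
    (m : (ℕ → ℝ) → C(W, ℝ)) : Prop :=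
  SMFSeparable In m ∧ ¬ SMFReducible In m

namespace Stmt13Aux

open Filter Topology

variable {ι : Type*} {In : ℕ → Finset ι}

/-- Normalized sequence `zₙ/|Iₙ|`. -/
noncomputable def r (In : ℕ → Finset ι) (z : ℕ → ℝ) (n : ℕ) : ℝ :=
  z n / ((In n).card : ℝ)

/-- Bound certificate for membership in `X^ℝ`. -/
def Bnd (In : ℕ → Finset ι) (C : ℝ) (z : ℕ → ℝ) : Prop :=
  (∀ n, |z n| ≤ C * ((In n).card : ℝ)) ∧
  ∀ n, |z (n+1) - z n| ≤ C * (((In (n+1)).card : ℝ) - ((In n).card : ℝ))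

lemma card_mono (hmono : Monotone In) (n : ℕ) :
    ((In n).card : ℝ) ≤ ((In (n+1)).card : ℝ) := by
  exact_mod_cast Finset.card_le_card (hmono (Nat.le_succ n))

lemma Bnd.mono {C C' : ℝ} {z : ℕ → ℝ} (hmono : Monotone In)
    (h : Bnd In C z) (hCC : C ≤ C') : Bnd In C' z := by
  constructor
  · intro n
    exact (h.1 n).trans (mul_le_mul_of_nonneg_right hCC (Nat.cast_nonneg _))
  · intro n
    exact (h.2 n).trans (mul_le_mul_of_nonneg_right hCC
      (sub_nonneg.2 (card_mono hmono n)))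

lemma frame_le {x : ℕ → ℝ} (hx : FrameCompatible In x) :
    ∀ n, 0 ≤ x n ∧ x n ≤ ((In n).card : ℝ) := by
  intro n
  induction n with
  | zero => exact hx.1
  | succ k ih =>
    obtain ⟨h1, h2⟩ := hx.2 k
    exact ⟨by linarith [ih.1], by linarith [ih.2]⟩

lemma bnd_of_mem_XR {z : ℕ → ℝ} (hz : z ∈ XR In) :
    ∃ C, 0 ≤ C ∧ Bnd In C z := by
  obtain ⟨a, ⟨c1, hc1, x1, hx1, rfl⟩, b, ⟨c2, hc2, x2, hx2, rfl⟩, rfl⟩ := hz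
  refine ⟨c1 + c2, by linarith, fun n => ?_, fun n => ?_⟩
  · have h1 := frame_le hx1 n
    have h2 := frame_le hx2 n
    have : (c1 • x1 - c2 • x2) n = c1 * x1 n - c2 * x2 n := by
      simp [smul_eq_mul]
    rw [this, abs_le]
    constructor <;> nlinarith [h1.1, h1.2, h2.1, h2.2]
  · have h1 := hx1.2 n
    have h2 := hx2.2 n
    have e : (c1 • x1 - c2 • x2) (n+1) - (c1 • x1 - c2 • x2) n
        = c1 * (x1 (n+1) - x1 n) - c2 * (x2 (n+1) - x2 n) := by
      simp [smul_eq_mul]; ring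
    rw [e, abs_le]
    constructor <;> nlinarith [h1.1, h1.2, h2.1, h2.2]

lemma mem_XR_of_bnd (hmono : Monotone In) {C : ℝ} {z : ℕ → ℝ}
    (hC : 0 ≤ C) (h : Bnd In C z) : z ∈ XR In := by
  set D : ℝ := C + 1 with hD_def
  have hD : (0:ℝ) < D := by simp [hD_def]; linarith
  have hb : Bnd In D z := h.mono hmono (by simp [hD_def])
  set p : ℕ → ℝ := fun n =>
    Nat.rec (max (z 0) 0) (fun k pk => pk + max (z (k+1) - z k) 0) n with hp_def
  have hp0 : p 0 = max (z 0) 0 := rfl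
  have hpS : ∀ n, p (n+1) = p n + max (z (n+1) - z n) 0 := fun n => rfl
  set q : ℕ → ℝ := fun n => p n - z n with hq_def
  have hΔ : ∀ n, (0:ℝ) ≤ ((In (n+1)).card : ℝ) - ((In n).card : ℝ) :=
    fun n => sub_nonneg.2 (card_mono hmono n)
  have hcard : ∀ n, (0:ℝ) ≤ ((In n).card : ℝ) := fun n => Nat.cast_nonneg _
  -- bounds for p
  have hp0b : 0 ≤ p 0 ∧ p 0 ≤ D * ((In 0).card : ℝ) := by
    rw [hp0]
    exact ⟨le_max_right _ _, (max_le (le_abs_self _) (abs_nonneg _)).trans (hb.1 0)⟩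
  have hpS' : ∀ n, 0 ≤ p (n+1) - p n ∧
      p (n+1) - p n ≤ D * (((In (n+1)).card : ℝ) - ((In n).card : ℝ)) := by
    intro n
    rw [hpS n]
    constructor
    · simp [le_max_right]
    · have : max (z (n+1) - z n) 0 ≤ |z (n+1) - z n| :=
        max_le (le_abs_self _) (abs_nonneg _)
      simp only [add_sub_cancel_left]
      exact this.trans (hb.2 n)
  -- bounds for q
  have hq0b : 0 ≤ q 0 ∧ q 0 ≤ D * ((In 0).card : ℝ) := by
    simp only [hq_def, hp0]
    constructor
    · simp [le_max_left]
    · have : max (z 0) 0 - z 0 ≤ |z 0| := by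
        rcases le_total 0 (z 0) with h0 | h0
        · simp [max_eq_left h0, abs_nonneg]
        · rw [max_eq_right h0, abs_of_nonpos h0]; linarith
      exact this.trans (hb.1 0)
  have hqS' : ∀ n, 0 ≤ q (n+1) - q n ∧
      q (n+1) - q n ≤ D * (((In (n+1)).card : ℝ) - ((In n).card : ℝ)) := by
    intro n
    have e : q (n+1) - q n = max (z (n+1) - z n) 0 - (z (n+1) - z n) := by
      simp only [hq_def, hpS n]; ring
    rw [e]
    set d := z (n+1) - z n
    constructor
    · simp [le_max_left]
    · have : max d 0 - d ≤ |d| := by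
        rcases le_total 0 d with h0 | h0
        · simp [max_eq_left h0, abs_nonneg]
        · rw [max_eq_right h0, abs_of_nonpos h0]; linarith
      exact this.trans (hb.2 n)
  -- assemble memberships
  have mem_of : ∀ g : ℕ → ℝ, (0 ≤ g 0 ∧ g 0 ≤ D * ((In 0).card : ℝ)) →
      (∀ n, 0 ≤ g (n+1) - g n ∧
        g (n+1) - g n ≤ D * (((In (n+1)).card : ℝ) - ((In n).card : ℝ))) →
      g ∈ Xplus In := by
    intro g h0 hS
    refine ⟨D, hD.le, D⁻¹ • g, ⟨⟨?_, ?_⟩, ?_⟩, ?_⟩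
    · exact mul_nonneg (by positivity) h0.1
    · have : (D⁻¹ • g) 0 = g 0 / D := by simp [smul_eq_mul, div_eq_inv_mul]
      rw [this, div_le_iff₀ hD]
      linarith [h0.2]
    · intro n
      have e : (D⁻¹ • g) (n+1) - (D⁻¹ • g) n = (g (n+1) - g n) / D := by
        simp [smul_eq_mul, div_eq_inv_mul]; ring
      rw [e]
      constructor
      · exact div_nonneg (hS n).1 hD.le
      · rw [div_le_iff₀ hD]
        linarith [(hS n).2]
    · funext n
      simp [smul_eq_mul]
      field_simp
  have hzpq : z = p - q := by
    funext n; simp [hq_def]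
  exact ⟨p, mem_of p hp0b hpS', q, mem_of q hq0b hqS', hzpq⟩

end Stmt13Aux
namespace Stmt13Aux

variable {ι : Type*} {In : ℕ → Finset ι}

lemma Bnd.add {C D : ℝ} {z u : ℕ → ℝ} (hz : Bnd In C z) (hu : Bnd In D u) :
    Bnd In (C + D) (fun n => z n + u n) := by
  constructor
  · intro n
    calc |z n + u n| ≤ |z n| + |u n| := abs_add_le _ _
    _ ≤ C * _ + D * _ := add_le_add (hz.1 n) (hu.1 n)
    _ = (C + D) * _ := by ring
  · intro n
    calc |z (n+1) + u (n+1) - (z n + u n)| = |(z (n+1) - z n) + (u (n+1) - u n)| := by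
          ring_nf
    _ ≤ |z (n+1) - z n| + |u (n+1) - u n| := abs_add_le _ _
    _ ≤ C * _ + D * _ := add_le_add (hz.2 n) (hu.2 n)
    _ = (C + D) * _ := by ring

lemma Bnd.neg {C : ℝ} {z : ℕ → ℝ} (hz : Bnd In C z) : Bnd In C (fun n => -z n) := by
  constructor
  · intro n; rw [abs_neg]; exact hz.1 n
  · intro n
    have : -z (n+1) - -z n = -(z (n+1) - z n) := by ring
    rw [this, abs_neg]; exact hz.2 n

lemma Bnd.sub {C D : ℝ} {z u : ℕ → ℝ} (hz : Bnd In C z) (hu : Bnd In D u) :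
    Bnd In (C + D) (fun n => z n - u n) := by
  have := hz.add hu.neg
  simpa [sub_eq_add_neg] using this

lemma Bnd.smul {C : ℝ} (c : ℝ) {z : ℕ → ℝ} (hz : Bnd In C z) :
    Bnd In (|c| * C) (fun n => c * z n) := by
  constructor
  · intro n
    rw [abs_mul, mul_assoc]
    exact mul_le_mul_of_nonneg_left (hz.1 n) (abs_nonneg _)
  · intro n
    have : c * z (n+1) - c * z n = c * (z (n+1) - z n) := by ring
    rw [this, abs_mul, mul_assoc]
    exact mul_le_mul_of_nonneg_left (hz.2 n) (abs_nonneg _)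

lemma Bnd.abs {C : ℝ} {z : ℕ → ℝ} (hz : Bnd In C z) : Bnd In C (fun n => |z n|) := by
  constructor
  · intro n; rw [abs_abs]; exact hz.1 n
  · intro n; exact (abs_abs_sub_abs_le_abs_sub _ _).trans (hz.2 n)

lemma Bnd.i (hmono : Monotone In) : Bnd In 1 (fun n => ((In n).card : ℝ)) := by
  constructor
  · intro n; rw [abs_of_nonneg (Nat.cast_nonneg _)]; simp
  · intro n
    rw [abs_of_nonneg (sub_nonneg.2 (card_mono hmono n))]; simp

lemma XR_iff (hmono : Monotone In) {z : ℕ → ℝ} :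
    z ∈ XR In ↔ ∃ C, 0 ≤ C ∧ Bnd In C z :=
  ⟨bnd_of_mem_XR, fun ⟨C, hC, h⟩ => mem_XR_of_bnd hmono hC h⟩

lemma i_mem_XR (hmono : Monotone In) : (fun n => ((In n).card : ℝ)) ∈ XR In :=
  mem_XR_of_bnd hmono zero_le_one (Bnd.i hmono)

lemma XR.sub (hmono : Monotone In) {z u : ℕ → ℝ} (hz : z ∈ XR In) (hu : u ∈ XR In) :
    (fun n => z n - u n) ∈ XR In := by
  obtain ⟨C, hC, hb⟩ := bnd_of_mem_XR hz
  obtain ⟨D, hD, hb'⟩ := bnd_of_mem_XR hu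
  exact mem_XR_of_bnd hmono (by linarith) (hb.sub hb')

lemma XR.add (hmono : Monotone In) {z u : ℕ → ℝ} (hz : z ∈ XR In) (hu : u ∈ XR In) :
    (fun n => z n + u n) ∈ XR In := by
  obtain ⟨C, hC, hb⟩ := bnd_of_mem_XR hz
  obtain ⟨D, hD, hb'⟩ := bnd_of_mem_XR hu
  exact mem_XR_of_bnd hmono (by linarith) (hb.add hb')

lemma XR.abs (hmono : Monotone In) {z : ℕ → ℝ} (hz : z ∈ XR In) :
    (fun n => |z n|) ∈ XR In := by
  obtain ⟨C, hC, hb⟩ := bnd_of_mem_XR hz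
  exact mem_XR_of_bnd hmono hC hb.abs

lemma XR.smul (hmono : Monotone In) (c : ℝ) {z : ℕ → ℝ} (hz : z ∈ XR In) :
    (fun n => c * z n) ∈ XR In := by
  obtain ⟨C, hC, hb⟩ := bnd_of_mem_XR hz
  exact mem_XR_of_bnd hmono (by positivity) (hb.smul c)

lemma ci_mem_XR (hmono : Monotone In) (c : ℝ) :
    (fun n => c * ((In n).card : ℝ)) ∈ XR In :=
  XR.smul hmono c (i_mem_XR hmono)

lemma zero_mem_XR (hmono : Monotone In) : (fun _ : ℕ => (0:ℝ)) ∈ XR In := by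
  have := ci_mem_XR hmono 0
  simpa using this

/-- `r` bound. -/
lemma r_abs_le {C : ℝ} {z : ℕ → ℝ} (hC : 0 ≤ C) (hb : Bnd In C z) (n : ℕ) :
    |r In z n| ≤ C := by
  rcases eq_or_lt_of_le (Nat.cast_nonneg (α := ℝ) (In n).card) with h | h
  · have hz : z n = 0 := by
      have := hb.1 n
      rw [← h, mul_zero] at this
      exact abs_eq_zero.1 (le_antisymm this (abs_nonneg _))
    simpa [r, hz] using hC
  · rw [r, abs_div, abs_of_nonneg (le_of_lt h), div_le_iff₀ h]
    calc |z n| ≤ C * _ := hb.1 n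

lemma r_bddA {z : ℕ → ℝ} (hz : z ∈ XR In) :
    Filter.IsBoundedUnder (· ≤ ·) Filter.atTop (r In z) := by
  obtain ⟨C, hC, hb⟩ := bnd_of_mem_XR hz
  exact Filter.isBoundedUnder_of ⟨C, fun n => (le_abs_self _).trans (r_abs_le hC hb n)⟩

lemma r_bddB {z : ℕ → ℝ} (hz : z ∈ XR In) :
    Filter.IsBoundedUnder (· ≥ ·) Filter.atTop (r In z) := by
  obtain ⟨C, hC, hb⟩ := bnd_of_mem_XR hz
  exact Filter.isBoundedUnder_of ⟨-C, fun n => neg_le_of_abs_le (r_abs_le hC hb n)⟩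

lemma r_cobddA {z : ℕ → ℝ} (hz : z ∈ XR In) :
    Filter.IsCoboundedUnder (· ≤ ·) Filter.atTop (r In z) :=
  (r_bddB hz).isCoboundedUnder_le

lemma r_cobddB {z : ℕ → ℝ} (hz : z ∈ XR In) :
    Filter.IsCoboundedUnder (· ≥ ·) Filter.atTop (r In z) :=
  (r_bddA hz).isCoboundedUnder_ge

/-- Arithmetic for `r`. -/
lemma r_sub (z u : ℕ → ℝ) : r In (fun n => z n - u n) = fun n => r In z n - r In u n := by
  funext n; simp [r, sub_div]

lemma r_add (z u : ℕ → ℝ) : r In (fun n => z n + u n) = fun n => r In z n + r In u n := by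
  funext n; simp [r, add_div]

lemma r_neg (z : ℕ → ℝ) : r In (fun n => -z n) = fun n => -r In z n := by
  funext n; simp [r, neg_div]

lemma r_abs (z : ℕ → ℝ) : r In (fun n => |z n|) = fun n => |r In z n| := by
  funext n
  simp [r, abs_div, abs_of_nonneg (Nat.cast_nonneg (α := ℝ) (In n).card)]

lemma r_smul (c : ℝ) (z : ℕ → ℝ) : r In (fun n => c * z n) = fun n => c * r In z n := by
  funext n; simp [r, mul_div_assoc]

lemma card_eventually_pos [Nonempty ι] (hmono : Monotone In)
    (hcover : ∀ i : ι, ∃ n, i ∈ In n) :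
    ∀ᶠ n in Filter.atTop, (0:ℝ) < ((In n).card : ℝ) := by
  obtain ⟨n0, hn0⟩ := hcover (Classical.arbitrary ι)
  refine Filter.eventually_atTop.2 ⟨n0, fun n hn => ?_⟩
  have : (Classical.arbitrary ι) ∈ In n := hmono hn hn0
  exact_mod_cast Finset.card_pos.2 ⟨_, this⟩

lemma r_ci_eventually [Nonempty ι] (hmono : Monotone In)
    (hcover : ∀ i : ι, ∃ n, i ∈ In n) (c : ℝ) :
    ∀ᶠ n in Filter.atTop, r In (fun k => c * ((In k).card : ℝ)) n = c := by
  filter_upwards [card_eventually_pos hmono hcover] with n hn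
  rw [r, mul_div_assoc, div_self (ne_of_gt hn), mul_one]

end Stmt13Aux
namespace Stmt13Aux

variable {ι : Type*} {In : ℕ → Finset ι}
variable {W : Type*} [TopologicalSpace W] {m : (ℕ → ℝ) → C(W, ℝ)}

lemma zero_mem_Xplus (hmono : Monotone In) : (fun _ : ℕ => (0:ℝ)) ∈ Xplus In := by
  refine ⟨0, le_refl _, (fun _ : ℕ => (0:ℝ)), ⟨⟨le_refl _, Nat.cast_nonneg _⟩, ?_⟩, ?_⟩
  · intro n
    simp only [sub_zero, sub_self]
    exact ⟨le_refl _, sub_nonneg.2 (card_mono hmono n)⟩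
  · funext n; simp

lemma Xplus_sub_XR (hmono : Monotone In) : Xplus In ⊆ XR In := by
  intro y hy
  exact ⟨y, hy, (fun _ : ℕ => (0:ℝ)), zero_mem_Xplus hmono, by funext n; simp⟩

lemma m_zero (hmono : Monotone In) (hm : IsSeqMF In m) : m (fun _ : ℕ => (0:ℝ)) = 0 := by
  have h := hm.2.2.2.2 (fun n => ((In n).card : ℝ)) (i_mem_XR hmono) 0
  have e : (0:ℝ) • (fun n => ((In n).card : ℝ)) = (fun _ : ℕ => (0:ℝ)) := by
    funext n; simp
  rw [e] at h
  rw [h, zero_smul]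

lemma m_sub (hmono : Monotone In) (hm : IsSeqMF In m) {z u : ℕ → ℝ}
    (hz : z ∈ XR In) (hu : u ∈ XR In) :
    m (fun n => z n - u n) = m z - m u := by
  have hd : (fun n => z n - u n) ∈ XR In := XR.sub hmono hz hu
  have h := hm.2.2.2.1 _ hd u hu
  have e : (fun n => z n - u n) + u = z := by funext n; simp
  rw [e] at h
  rw [h]; ring

lemma m_ci (hm : IsSeqMF In m) (hmono : Monotone In) (c : ℝ) :
    m (fun n => c * ((In n).card : ℝ)) = c • (1 : C(W, ℝ)) := by
  have h := hm.2.2.2.2 (fun n => ((In n).card : ℝ)) (i_mem_XR hmono) c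
  have e : c • (fun n => ((In n).card : ℝ)) = (fun n => c * ((In n).card : ℝ)) := by
    funext n; simp
  rw [e] at h
  rw [h, hm.2.2.1]

/-- Fundamental order lemma. -/
lemma m_nonneg_iff (hmono : Monotone In) (hm : IsSeqMF In m) {z : ℕ → ℝ}
    (hz : z ∈ XR In) :
    (∀ w : W, 0 ≤ m z w) ↔ 0 ≤ Filter.atTop.liminf (r In z) := by
  obtain ⟨x, hx, y, hy, hzeq⟩ := hz
  have hxR : x ∈ XR In := Xplus_sub_XR hmono hx
  have hyR : y ∈ XR In := Xplus_sub_XR hmono hy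
  have hz' : z = fun n => x n - y n := by rw [hzeq]; rfl
  have hmsub : m z = m x - m y := by rw [hz']; exact m_sub hmono hm hxR hyR
  have hord := hm.2.1 y hy x hx
  constructor
  · intro h
    have : ∀ w : W, m y w ≤ m x w := by
      intro w
      have := h w
      rw [hmsub] at this
      simpa [sub_nonneg] using this
    have hs := hord.1 this
    unfold SeqLeq at hs
    convert hs using 2
    funext n
    rw [hz']; rfl
  · intro h
    intro w
    have hs : SeqLeq In y x := by
      unfold SeqLeq
      convert h using 2
      funext n
      rw [hz']; rfl
    have := hord.2 hs w
    rw [hmsub]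
    simpa [sub_nonneg] using this

lemma liminf_shift_limsup {z : ℕ → ℝ} (hz : z ∈ XR In) (c : ℝ) :
    Filter.atTop.liminf (fun n => c - r In z n)
      = c - Filter.atTop.limsup (r In z) := by
  have h := Antitone.map_limsup_of_continuousAt (F := Filter.atTop)
    (f := fun t : ℝ => c - t) (fun a b hab => by simp; linarith) (r In z)
    ((continuous_const.sub continuous_id).continuousAt) (r_bddA hz) (r_cobddA hz)
  exact h.symm

lemma limsup_r_neg {z : ℕ → ℝ} (hz : z ∈ XR In) :
    Filter.atTop.limsup (r In (fun n => -z n)) = - Filter.atTop.liminf (r In z) := by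
  have h := Antitone.map_liminf_of_continuousAt (F := Filter.atTop)
    (f := fun t : ℝ => -t) (fun a b hab => by simp; linarith) (r In z)
    (continuous_neg.continuousAt) (r_cobddB hz) (r_bddB hz)
  rw [r_neg]
  exact h.symm

/-- Upper bound lemma. -/
lemma m_le_iff [Nonempty ι] (hmono : Monotone In)
    (hcover : ∀ i : ι, ∃ n, i ∈ In n) (hm : IsSeqMF In m) {z : ℕ → ℝ}
    (hz : z ∈ XR In) (c : ℝ) :
    (∀ w : W, m z w ≤ c) ↔ Filter.atTop.limsup (r In z) ≤ c := by
  have hciR : (fun n => c * ((In n).card : ℝ)) ∈ XR In := ci_mem_XR hmono c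
  set u : ℕ → ℝ := fun n => c * ((In n).card : ℝ) - z n with hu_def
  have huR : u ∈ XR In := XR.sub hmono hciR hz
  have hmu : ∀ w : W, m u w = c - m z w := by
    intro w
    have := m_sub hmono hm hciR hz
    rw [hu_def, this, m_ci hm hmono c]
    simp
  have hiff := m_nonneg_iff hmono hm huR
  have hlim : Filter.atTop.liminf (r In u) =
      c - Filter.atTop.limsup (r In z) := by
    have hev : ∀ᶠ n in Filter.atTop, r In u n = c - r In z n := by
      filter_upwards [r_ci_eventually hmono hcover c] with n hn
      rw [hu_def]
      have : r In (fun k => c * ((In k).card : ℝ) - z k) n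
          = r In (fun k => c * ((In k).card : ℝ)) n - r In z n := by
        rw [r_sub]
      rw [this, hn]
    rw [Filter.liminf_congr hev]
    exact liminf_shift_limsup hz c
  constructor
  · intro h
    have h0 : ∀ w : W, 0 ≤ m u w := fun w => by rw [hmu w]; linarith [h w]
    have := hiff.1 h0
    rw [hlim] at this
    linarith
  · intro h w
    have : 0 ≤ Filter.atTop.liminf (r In u) := by rw [hlim]; linarith
    have := hiff.2 this w
    rw [hmu w] at this
    linarith

lemma m_le_limsup [Nonempty ι] (hmono : Monotone In)
    (hcover : ∀ i : ι, ∃ n, i ∈ In n) (hm : IsSeqMF In m) {z : ℕ → ℝ}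
    (hz : z ∈ XR In) (w : W) : m z w ≤ Filter.atTop.limsup (r In z) :=
  (m_le_iff hmono hcover hm hz _).2 le_rfl w

lemma exists_near_sup [Nonempty ι] [Nonempty W] (hmono : Monotone In)
    (hcover : ∀ i : ι, ∃ n, i ∈ In n) (hm : IsSeqMF In m) {z : ℕ → ℝ}
    (hz : z ∈ XR In) {δ : ℝ} (hδ : 0 < δ) :
    ∃ w : W, Filter.atTop.limsup (r In z) - δ < m z w := by
  by_contra h
  push_neg at h
  have := (m_le_iff hmono hcover hm hz _).1 h
  linarith

lemma m_mono_of_pointwise (hmono : Monotone In) (hm : IsSeqMF In m) {z u : ℕ → ℝ}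
    (hz : z ∈ XR In) (hu : u ∈ XR In) (h : ∀ n, z n ≤ u n) (w : W) :
    m z w ≤ m u w := by
  have hd : (fun n => u n - z n) ∈ XR In := XR.sub hmono hu hz
  have h0 : 0 ≤ Filter.atTop.liminf (r In (fun n => u n - z n)) := by
    refine Filter.le_liminf_of_le (r_cobddB hd) ?_
    exact Filter.Eventually.of_forall fun n =>
      div_nonneg (sub_nonneg.2 (h n)) (Nat.cast_nonneg _)
  have := (m_nonneg_iff hmono hm hd).2 h0 w
  have hms := m_sub hmono hm hu hz
  rw [hms] at this
  simpa [sub_nonneg] using this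

lemma m_sum (hmono : Monotone In) (hm : IsSeqMF In m) {α : Type*}
    (G : Finset α) (g : α → ℕ → ℝ) (hg : ∀ a ∈ G, g a ∈ XR In) :
    (fun n => ∑ a ∈ G, g a n) ∈ XR In ∧
      m (fun n => ∑ a ∈ G, g a n) = ∑ a ∈ G, m (g a) := by
  classical
  induction G using Finset.induction_on with
  | empty => simpa using ⟨zero_mem_XR hmono, m_zero hmono hm⟩
  | insert a G' hnotmem ih =>
    have hga : g a ∈ XR In := hg a (Finset.mem_insert_self _ _)
    have hrest := ih (fun b hb => hg b (Finset.mem_insert_of_mem hb))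
    have e : (fun n => ∑ b ∈ insert a G', g b n)
        = (fun n => g a n + ∑ b ∈ G', g b n) := by
      funext n; rw [Finset.sum_insert hnotmem]
    constructor
    · rw [e]; exact XR.add hmono hga hrest.1
    · rw [e]
      have hadd := hm.2.2.2.1 (g a) hga _ hrest.1
      have e2 : g a + (fun n => ∑ b ∈ G', g b n) = (fun n => g a n + ∑ b ∈ G', g b n) := rfl
      rw [e2] at hadd
      rw [hadd, hrest.2, Finset.sum_insert hnotmem]

end Stmt13Aux
namespace Stmt13Aux

variable {ι : Type*} {In : ℕ → Finset ι}
variable {W : Type*} [TopologicalSpace W] {m : (ℕ → ℝ) → C(W, ℝ)}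

lemma XR.sum (hmono : Monotone In) {α : Type*} (G : Finset α) (g : α → ℕ → ℝ)
    (hg : ∀ a ∈ G, g a ∈ XR In) : (fun n => ∑ a ∈ G, g a n) ∈ XR In := by
  classical
  induction G using Finset.induction_on with
  | empty => simpa using zero_mem_XR hmono
  | insert a G' hnotmem ih =>
    have e : (fun n => ∑ b ∈ insert a G', g b n)
        = (fun n => g a n + ∑ b ∈ G', g b n) := by
      funext n; rw [Finset.sum_insert hnotmem]
    rw [e]
    exact XR.add hmono (hg a (Finset.mem_insert_self _ _))
      (ih fun b hb => hg b (Finset.mem_insert_of_mem hb))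

lemma XR.neg (hmono : Monotone In) {z : ℕ → ℝ} (hz : z ∈ XR In) :
    (fun n => -z n) ∈ XR In := by
  have := XR.sub hmono (zero_mem_XR hmono) hz
  simpa using this

/-- KEY LEMMA (ultrafilter recentering): one can recenter finitely many elements of
`X^ℝ` so that subtracting the absolute errors does not decrease the limsup of `z`. -/
lemma exists_shift [Nonempty ι] (hmono : Monotone In)
    (hcover : ∀ i : ι, ∃ n, i ∈ In n) {z : ℕ → ℝ} (hz : z ∈ XR In)
    (G : Finset (ℕ → ℝ)) (hG : ∀ u ∈ G, u ∈ XR In) :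
    ∃ c : (ℕ → ℝ) → ℝ,
      (fun n => z n - ∑ u ∈ G, |u n - c u * ((In n).card : ℝ)|) ∈ XR In ∧
      Filter.atTop.limsup (r In z) ≤
        Filter.atTop.limsup
          (r In (fun n => z n - ∑ u ∈ G, |u n - c u * ((In n).card : ℝ)|)) := by
  classical
  set s : ℝ := Filter.atTop.limsup (r In z) with hs_def
  -- the filter of near-maximizing indices
  set F : Filter ℕ := Filter.atTop ⊓ Filter.comap (r In z) (nhds s) with hF_def
  have hFne : F.NeBot := by
    rw [← Filter.forall_mem_nonempty_iff_neBot]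
    intro S hS
    rw [hF_def, Filter.mem_inf_iff] at hS
    obtain ⟨A, hA, B, hB, rfl⟩ := hS
    obtain ⟨T, hT, hTB⟩ := Filter.mem_comap.1 hB
    obtain ⟨ε, hε, hball⟩ := Metric.mem_nhds_iff.1 hT
    obtain ⟨N, hN⟩ := Filter.mem_atTop_sets.1 hA
    have hfreq : ∃ᶠ n in Filter.atTop, s - ε < r In z n :=
      Filter.frequently_lt_of_lt_limsup (r_cobddA hz) (by rw [← hs_def]; linarith)
    have hev : ∀ᶠ n in Filter.atTop, r In z n < s + ε :=
      Filter.eventually_lt_of_limsup_lt (by rw [← hs_def]; linarith) (r_bddA hz)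
    have hev2 : ∀ᶠ n in Filter.atTop, N ≤ n := Filter.eventually_ge_atTop N
    obtain ⟨n, hn1, hn2, hn3⟩ := (hfreq.and_eventually (hev.and hev2)).exists
    refine ⟨n, hN n hn3, hTB ?_⟩
    have : dist (r In z n) s < ε := by
      rw [Real.dist_eq, abs_lt]
      constructor <;> linarith
    exact hball (Metric.mem_ball.2 this)
  set U : Ultrafilter ℕ := @Ultrafilter.of ℕ F hFne with hU_def
  have hUF : (U : Filter ℕ) ≤ F := Ultrafilter.of_le F
  have hUtop : (U : Filter ℕ) ≤ Filter.atTop := hUF.trans inf_le_left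
  have htendz : Filter.Tendsto (r In z) U (nhds s) := by
    rw [Filter.tendsto_iff_comap]
    exact hUF.trans inf_le_right
  -- limits of the u's along U
  have hex : ∀ u ∈ G, ∃ a : ℝ, Filter.Tendsto (r In u) U (nhds a) := by
    intro u hu
    obtain ⟨C, hC, hb⟩ := bnd_of_mem_XR (hG u hu)
    have hle : (U.map (r In u) : Filter ℝ) ≤ Filter.principal (Set.Icc (-C) C) := by
      rw [Filter.le_principal_iff]
      exact Filter.mem_map.2 (Filter.univ_mem' fun n => abs_le.1 (r_abs_le hC hb n))
    obtain ⟨a, _, ha⟩ := isCompact_Icc.ultrafilter_le_nhds (U.map (r In u)) hle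
    exact ⟨a, ha⟩
  set c : (ℕ → ℝ) → ℝ := fun u =>
    if h : ∃ a : ℝ, Filter.Tendsto (r In u) U (nhds a) then h.choose else 0 with hc_def
  have hc : ∀ u ∈ G, Filter.Tendsto (r In u) U (nhds (c u)) := by
    intro u hu
    have h := hex u hu
    simp only [hc_def, dif_pos h]
    exact h.choose_spec
  set h : ℕ → ℝ := fun n => z n - ∑ u ∈ G, |u n - c u * ((In n).card : ℝ)| with hh_def
  have hhR : h ∈ XR In := by
    refine XR.sub hmono hz (XR.sum hmono G _ fun u hu => ?_)
    exact XR.abs hmono (XR.sub hmono (hG u hu) (ci_mem_XR hmono (c u)))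
  refine ⟨c, hhR, ?_⟩
  -- r h is eventually equal (along U) to an explicitly convergent expression
  have hev_eq : ∀ᶠ n in (U : Filter ℕ),
      r In h n = r In z n - ∑ u ∈ G, |r In u n - c u| := by
    have : ∀ᶠ n in Filter.atTop, (0:ℝ) < ((In n).card : ℝ) :=
      card_eventually_pos hmono hcover
    filter_upwards [hUtop this] with n hn
    rw [hh_def]
    have e1 : r In (fun k => z k - ∑ u ∈ G, |u k - c u * ((In k).card : ℝ)|) n
        = r In z n - (∑ u ∈ G, |u n - c u * ((In n).card : ℝ)|) / ((In n).card : ℝ) := by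
      simp [r, sub_div]
    rw [e1, Finset.sum_div]
    congr 1
    refine Finset.sum_congr rfl fun u hu => ?_
    have e2 : r In u n - c u = (u n - c u * ((In n).card : ℝ)) / ((In n).card : ℝ) := by
      rw [sub_div, mul_div_assoc, div_self (ne_of_gt hn), mul_one]; rfl
    rw [e2, abs_div, abs_of_pos hn]
  have htendh : Filter.Tendsto (r In h) U (nhds s) := by
    have h2 : Filter.Tendsto (fun n => r In z n - ∑ u ∈ G, |r In u n - c u|) U
        (nhds (s - ∑ u ∈ G, |c u - c u|)) := by
      exact htendz.sub (tendsto_finset_sum G fun u hu => ((hc u hu).sub tendsto_const_nhds).abs)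
    simp only [sub_self, abs_zero, Finset.sum_const_zero, sub_zero] at h2
    exact h2.congr' (hev_eq.mono fun n hn => hn.symm)
  -- conclude limsup bound
  by_contra hcon
  push_neg at hcon
  set t : ℝ := Filter.atTop.limsup (r In h) with ht_def
  have hδ : 0 < (s - t) / 2 := by linarith
  have hevU : ∀ᶠ n in (U : Filter ℕ), t + (s - t) / 2 < r In h n := by
    have : Set.Ioi (t + (s - t)/2) ∈ nhds s := Ioi_mem_nhds (by linarith)
    exact htendh this
  have hfreq : ∃ᶠ n in Filter.atTop, t + (s - t) / 2 ≤ r In h n :=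
    Filter.Frequently.filter_mono (hevU.frequently.mono fun n hn => le_of_lt hn) hUtop
  have := Filter.le_limsup_of_frequently_le hfreq (r_bddA hhR)
  rw [← ht_def] at this
  linarith

end Stmt13Aux
namespace Stmt13Aux

variable {ι : Type*} {In : ℕ → Finset ι}
variable {W : Type*} [TopologicalSpace W] {m : (ℕ → ℝ) → C(W, ℝ)}

lemma m_nonneg_of_pointwise (hmono : Monotone In) (hm : IsSeqMF In m) {z : ℕ → ℝ}
    (hz : z ∈ XR In) (h : ∀ n, 0 ≤ z n) (w : W) : 0 ≤ m z w := by
  have := m_mono_of_pointwise hmono hm (zero_mem_XR hmono) hz h w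
  rwa [m_zero hmono hm] at this

/-- At some near-maximizing point `w` for `z`, `m` is nearly a lattice morphism on
the finitely many elements of `G`. -/
lemma key_approx [Nonempty ι] [Nonempty W] (hmono : Monotone In)
    (hcover : ∀ i : ι, ∃ n, i ∈ In n) (hm : IsSeqMF In m) {z : ℕ → ℝ}
    (hz : z ∈ XR In) (G : Finset (ℕ → ℝ)) (hG : ∀ u ∈ G, u ∈ XR In)
    {δ : ℝ} (hδ : 0 < δ) :
    ∃ w : W, Filter.atTop.limsup (r In z) - δ < m z w ∧
      ∀ u ∈ G, m (fun n => |u n|) w - |m u w| < δ := by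
  classical
  obtain ⟨c, hhR, hslim⟩ := exists_shift hmono hcover hz G hG
  set v : (ℕ → ℝ) → ℕ → ℝ := fun u n => |u n - c u * ((In n).card : ℝ)| with hv_def
  have hvR : ∀ u ∈ G, v u ∈ XR In := fun u hu =>
    XR.abs hmono (XR.sub hmono (hG u hu) (ci_mem_XR hmono (c u)))
  set h : ℕ → ℝ := fun n => z n - ∑ u ∈ G, v u n with hh_def
  have hδ2 : 0 < δ / 2 := by linarith
  obtain ⟨w, hw⟩ := exists_near_sup hmono hcover hm hhR hδ2
  have hsum := m_sum hmono hm G v hvR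
  have hmh : m h w = m z w - ∑ u ∈ G, m (v u) w := by
    have := m_sub hmono hm hz hsum.1
    rw [hh_def, this, hsum.2]
    simp
  have hBnonneg : ∀ u ∈ G, 0 ≤ m (v u) w := fun u hu =>
    m_nonneg_of_pointwise hmono hm (hvR u hu) (fun n => abs_nonneg _) w
  have hA : m z w ≤ Filter.atTop.limsup (r In z) :=
    m_le_limsup hmono hcover hm hz w
  have hsumlt : ∑ u ∈ G, m (v u) w < δ / 2 ∧
      Filter.atTop.limsup (r In z) - δ < m z w := by
    have h1 : Filter.atTop.limsup (r In z) - δ / 2 < m h w := by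
      calc Filter.atTop.limsup (r In z) - δ / 2
          ≤ Filter.atTop.limsup (r In h) - δ / 2 := by linarith
        _ < m h w := hw
    rw [hmh] at h1
    have hsge : 0 ≤ ∑ u ∈ G, m (v u) w := Finset.sum_nonneg hBnonneg
    exact ⟨by linarith, by linarith⟩
  refine ⟨w, hsumlt.2, fun u hu => ?_⟩
  have hBu : m (v u) w < δ / 2 :=
    lt_of_le_of_lt (Finset.single_le_sum hBnonneg hu) hsumlt.1
  -- (a) |m u w - c u| ≤ m (v u) w
  set d : ℕ → ℝ := fun n => u n - c u * ((In n).card : ℝ) with hd_def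
  have hdR : d ∈ XR In := XR.sub hmono (hG u hu) (ci_mem_XR hmono (c u))
  have hmd : m d w = m u w - c u := by
    have := m_sub hmono hm (hG u hu) (ci_mem_XR hmono (c u))
    rw [hd_def, this, m_ci hm hmono (c u)]
    simp
  have hdle : m d w ≤ m (v u) w :=
    m_mono_of_pointwise hmono hm hdR (hvR u hu) (fun n => le_abs_self _) w
  have hndR : (fun n => -d n) ∈ XR In := XR.neg hmono hdR
  have hmnd : m (fun n => -d n) w = -(m u w - c u) := by
    have e : (fun n => -d n) = fun n => (0:ℝ) - d n := by funext n; ring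
    rw [e, m_sub hmono hm (zero_mem_XR hmono) hdR]
    simp [m_zero hmono hm, hmd]
  have hndle : -(m u w - c u) ≤ m (v u) w := by
    rw [← hmnd]
    exact m_mono_of_pointwise hmono hm hndR (hvR u hu) (fun n => neg_le_abs _) w
  rw [hmd] at hdle
  have habs : |m u w - c u| ≤ m (v u) w := abs_le.2 ⟨by linarith, hdle⟩
  -- (b) m |u| w ≤ |c u| + m (v u) w
  set e : ℕ → ℝ := fun n => |u n| - |c u| * ((In n).card : ℝ) with he_def
  have heR : e ∈ XR In :=
    XR.sub hmono (XR.abs hmono (hG u hu)) (ci_mem_XR hmono |c u|)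
  have hme : m e w = m (fun n => |u n|) w - |c u| := by
    have := m_sub hmono hm (XR.abs hmono (hG u hu)) (ci_mem_XR hmono |c u|)
    rw [he_def, this, m_ci hm hmono |c u|]
    simp
  have hele : m e w ≤ m (v u) w := by
    refine m_mono_of_pointwise hmono hm heR (hvR u hu) (fun n => ?_) w
    have : |c u| * ((In n).card : ℝ) = |c u * ((In n).card : ℝ)| := by
      rw [abs_mul, Nat.abs_cast]
    rw [he_def]
    simp only []
    rw [this]
    exact (abs_sub_abs_le_abs_sub _ _)
  -- combine
  have h1 : m (fun n => |u n|) w ≤ |c u| + m (v u) w := by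
    rw [hme] at hele; linarith
  have h2 : |c u| - m (v u) w ≤ |m u w| := by
    have := abs_sub_abs_le_abs_sub (c u) (m u w)
    rw [abs_sub_comm] at this
    linarith [habs]
  linarith

/-- Existence of a lattice point of `m` above the limsup of `z`. -/
lemma exists_lattice_point [Nonempty ι] [Nonempty W] [CompactSpace W] [T2Space W]
    (hmono : Monotone In) (hcover : ∀ i : ι, ∃ n, i ∈ In n) (hm : IsSeqMF In m)
    {z : ℕ → ℝ} (hz : z ∈ XR In) :
    ∃ w : W, (∀ u ∈ XR In, m (fun n => |u n|) w ≤ |m u w|) ∧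
      Filter.atTop.limsup (r In z) ≤ m z w := by
  classical
  set s : ℝ := Filter.atTop.limsup (r In z) with hs_def
  set t : Finset (ℕ → ℝ) × ℕ → Set W := fun Fq =>
    {w | s - 1 / (Fq.2 + 1) ≤ m z w ∧
      ∀ u ∈ Fq.1, u ∈ XR In → m (fun n => |u n|) w - |m u w| ≤ 1 / (Fq.2 + 1)}
    with ht_def
  have hclosed : ∀ Fq, IsClosed (t Fq) := by
    intro Fq
    have h1 : IsClosed {w : W | s - 1 / (Fq.2 + 1) ≤ m z w} :=
      isClosed_le continuous_const (m z).continuous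
    have h2 : IsClosed {w : W | ∀ u ∈ Fq.1, u ∈ XR In →
        m (fun n => |u n|) w - |m u w| ≤ 1 / (Fq.2 + 1)} := by
      have : {w : W | ∀ u ∈ Fq.1, u ∈ XR In →
          m (fun n => |u n|) w - |m u w| ≤ 1 / (Fq.2 + 1)}
          = ⋂ u ∈ Fq.1, {w : W | u ∈ XR In →
              m (fun n => |u n|) w - |m u w| ≤ 1 / (Fq.2 + 1)} := by
        ext w; simp
      rw [this]
      refine isClosed_biInter fun u hu => ?_
      by_cases hXR : u ∈ XR In
      · simp only [hXR, forall_true_left]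
        exact isClosed_le ((m (fun n => |u n|)).continuous.sub (m u).continuous.abs)
          continuous_const
      · have : {w : W | u ∈ XR In →
            m (fun n => |u n|) w - |m u w| ≤ 1 / (Fq.2 + 1)} = Set.univ := by
          ext w; simp [hXR]
        rw [this]
        exact isClosed_univ
    exact h1.inter h2
  have hnonempty : ∀ Fq, (t Fq).Nonempty := by
    rintro ⟨F, q⟩
    have hq : (0:ℝ) < 1 / (q + 1) := by positivity
    set G : Finset (ℕ → ℝ) := F.filter (· ∈ XR In) with hG_def
    have hG : ∀ u ∈ G, u ∈ XR In := fun u hu => (Finset.mem_filter.1 hu).2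
    obtain ⟨w, hw1, hw2⟩ := key_approx hmono hcover hm hz G hG hq
    refine ⟨w, le_of_lt hw1, fun u hu hXR => ?_⟩
    exact le_of_lt (hw2 u (Finset.mem_filter.2 ⟨hu, hXR⟩))
  have hdir : Directed (· ⊇ ·) t := by
    rintro ⟨F1, q1⟩ ⟨F2, q2⟩
    refine ⟨⟨F1 ∪ F2, max q1 q2⟩, ?_, ?_⟩ <;>
    · rintro w ⟨hw1, hw2⟩
      have hle : 1 / ((max q1 q2 : ℕ) + (1:ℝ)) ≤ 1 / ((q1:ℝ) + 1) ∧
          1 / ((max q1 q2 : ℕ) + (1:ℝ)) ≤ 1 / ((q2:ℝ) + 1) := by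
        constructor <;>
        · apply one_div_le_one_div_of_le (by positivity)
          have : (q1:ℝ) ≤ (max q1 q2 : ℕ) ∨ (q2:ℝ) ≤ (max q1 q2 : ℕ) := by
            constructor <;> exact_mod_cast Nat.le_max_left _ _
          push_cast
          simp [Nat.le_max_left, Nat.le_max_right]
      constructor
      · refine le_trans (by linarith [hle.1, hle.2]) hw1
      · intro u hu hXR
        refine le_trans (hw2 u (Finset.mem_union.2 (by tauto)) hXR) (by linarith [hle.1, hle.2])
  have hint := IsCompact.nonempty_iInter_of_directed_nonempty_isCompact_isClosed t hdir
    hnonempty (fun Fq => (hclosed Fq).isCompact) hclosed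
  obtain ⟨w, hw⟩ := hint
  rw [Set.mem_iInter] at hw
  refine ⟨w, ?_, ?_⟩
  · intro u hu
    by_contra hcon
    push_neg at hcon
    obtain ⟨q, hq⟩ := exists_nat_one_div_lt (sub_pos.2 hcon)
    have := (hw ⟨{u}, q⟩).2 u (Finset.mem_singleton_self u) hu
    rw [one_div] at this hq
    linarith
  · by_contra hcon
    push_neg at hcon
    obtain ⟨q, hq⟩ := exists_nat_one_div_lt (sub_pos.2 hcon)
    have := (hw ⟨∅, q⟩).1
    rw [one_div] at this hq
    linarith

end Stmt13Aux
namespace Stmt13Aux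

variable {ι : Type*} {In : ℕ → Finset ι}
variable {W : Type*} [TopologicalSpace W] {m : (ℕ → ℝ) → C(W, ℝ)}

lemma liminf_r_neg {z : ℕ → ℝ} (hz : z ∈ XR In) :
    Filter.atTop.liminf (r In (fun n => -z n)) = - Filter.atTop.limsup (r In z) := by
  have h := Antitone.map_limsup_of_continuousAt (F := Filter.atTop)
    (f := fun t : ℝ => -t) (fun a b hab => by simp; linarith) (r In z)
    (continuous_neg.continuousAt) (r_bddA hz) (r_cobddA hz)
  rw [r_neg]
  exact h.symm

/-- The set of lattice points of `m`. -/
def latticeSet (In : ℕ → Finset ι) (m : (ℕ → ℝ) → C(W, ℝ)) : Set W :=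
  {w | ∀ u ∈ XR In, m (fun n => |u n|) w ≤ |m u w|}

lemma latticeSet_closed : IsClosed (latticeSet In m) := by
  have : latticeSet In m = ⋂ u : ℕ → ℝ, {w : W | u ∈ XR In →
      m (fun n => |u n|) w ≤ |m u w|} := by
    ext w; simp [latticeSet]
  rw [this]
  refine isClosed_iInter fun u => ?_
  by_cases hXR : u ∈ XR In
  · simp only [hXR, forall_true_left]
    exact isClosed_le (m (fun n => |u n|)).continuous (m u).continuous.abs
  · have : {w : W | u ∈ XR In → m (fun n => |u n|) w ≤ |m u w|} = Set.univ := by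
      ext w; simp [hXR]
    rw [this]; exact isClosed_univ

/-- If `m z ≤ 0` on the lattice set, then `limsup (r z) ≤ 0`. -/
lemma limsup_nonpos_of_latticeSet [Nonempty ι] [Nonempty W] [CompactSpace W] [T2Space W]
    (hmono : Monotone In) (hcover : ∀ i : ι, ∃ n, i ∈ In n) (hm : IsSeqMF In m)
    {z : ℕ → ℝ} (hz : z ∈ XR In) (h : ∀ w ∈ latticeSet In m, m z w ≤ 0) :
    Filter.atTop.limsup (r In z) ≤ 0 := by
  obtain ⟨w, hw1, hw2⟩ := exists_lattice_point hmono hcover hm hz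
  exact hw2.trans (h w hw1)

/-- If the lattice set is proper, `m` is reducible. -/
lemma reducible_of_latticeSet_ne [Nonempty ι] [CompactSpace W] [T2Space W]
    (hmono : Monotone In) (hcover : ∀ i : ι, ∃ n, i ∈ In n) (hm : IsSeqMF In m)
    (hne : latticeSet In m ≠ Set.univ) : SMFReducible In m := by
  have hWne : Nonempty W := by
    by_contra hW
    exact hne (Set.eq_univ_of_forall fun w => absurd (Nonempty.intro w) hW)
  set V : Set W := latticeSet In m with hV_def
  refine ⟨V, latticeSet_closed.isCompact, hne, ?_, ?_, ?_, ?_, ?_⟩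
  · -- property (1)
    intro x hx y hy
    constructor
    · intro h
      have hz : (fun n => x n - y n) ∈ XR In := XR.sub hmono hx hy
      have hzero : ∀ w ∈ V, m (fun n => x n - y n) w = 0 := by
        intro w hw
        have := ContinuousMap.congr_fun h (⟨w, hw⟩ : V)
        simp only [ContinuousMap.restrict_apply] at this
        rw [m_sub hmono hm hx hy]
        simp [this]
      have h1 : Filter.atTop.limsup (r In (fun n => x n - y n)) ≤ 0 :=
        limsup_nonpos_of_latticeSet hmono hcover hm hz
          (fun w hw => le_of_eq (hzero w hw))
      have hnz : (fun n => -(x n - y n)) ∈ XR In := XR.neg hmono hz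
      have h2 : Filter.atTop.limsup (r In (fun n => -(x n - y n))) ≤ 0 := by
        refine limsup_nonpos_of_latticeSet hmono hcover hm hnz fun w hw => ?_
        have e : (fun n => -(x n - y n)) = fun n => (0:ℝ) - (x n - y n) := by
          funext n; ring
        rw [e, m_sub hmono hm (zero_mem_XR hmono) hz]
        simp [m_zero hmono hm, hzero w hw]
      rw [limsup_r_neg hz] at h2
      have h3 : 0 ≤ Filter.atTop.liminf (r In (fun n => x n - y n)) := by linarith
      have h4 : Filter.atTop.liminf (r In (fun n => x n - y n)) ≤
          Filter.atTop.limsup (r In (fun n => x n - y n)) :=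
        Filter.liminf_le_limsup (r_bddA hz) (r_bddB hz)
      have hlim : Filter.Tendsto (r In (fun n => x n - y n)) Filter.atTop (nhds 0) :=
        tendsto_of_liminf_eq_limsup (le_antisymm (by linarith) h3)
          (le_antisymm h1 (by linarith)) (r_bddA hz) (r_bddB hz)
      exact hlim
    · intro h
      have := (hm.1 x hx y hy).2 h
      simp only [this]
  · -- property (2)
    intro x hx y hy
    constructor
    · intro h
      have hxR := Xplus_sub_XR hmono hx
      have hyR := Xplus_sub_XR hmono hy
      have hz : (fun n => x n - y n) ∈ XR In := XR.sub hmono hxR hyR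
      have hle : ∀ w ∈ V, m (fun n => x n - y n) w ≤ 0 := by
        intro w hw
        have := h (⟨w, hw⟩ : V)
        simp only [ContinuousMap.restrict_apply] at this
        rw [m_sub hmono hm hxR hyR]
        simp only [ContinuousMap.sub_apply]
        linarith
      have h1 : Filter.atTop.limsup (r In (fun n => x n - y n)) ≤ 0 :=
        limsup_nonpos_of_latticeSet hmono hcover hm hz hle
      unfold SeqLeq
      have e : (fun n => (y n - x n) / ((In n).card : ℝ))
          = r In (fun n => -(x n - y n)) := by
        funext n
        show (y n - x n) / ((In n).card : ℝ) = (-(x n - y n)) / ((In n).card : ℝ)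
        rw [neg_sub]
      rw [e, liminf_r_neg hz]
      linarith
    · intro hs
      intro v
      have := (hm.2.1 x hx y hy).2 hs (v : W)
      simpa [ContinuousMap.restrict_apply] using this
  · -- property (3)
    ext v
    simp [hm.2.2.1]
  · -- property (4)
    intro x hx y hy
    ext v
    simp [hm.2.2.2.1 x hx y hy]
  · -- property (5)
    intro x hx c
    ext v
    simp [hm.2.2.2.2 x hx c]

end Stmt13Aux
namespace Stmt13Aux

variable {ι : Type*} {In : ℕ → Finset ι}
variable {W : Type*} [TopologicalSpace W] {m : (ℕ → ℝ) → C(W, ℝ)}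

lemma real_max_eq (x y : ℝ) : max x y = 2⁻¹ * ((x + y) + |x - y|) := by
  rcases le_total x y with h | h
  · rw [max_eq_right h, abs_of_nonpos (by linarith), neg_sub]; ring
  · rw [max_eq_left h, abs_of_nonneg (by linarith)]; ring

lemma real_min_eq (x y : ℝ) : min x y = 2⁻¹ * ((x + y) - |x - y|) := by
  rcases le_total x y with h | h
  · rw [min_eq_left h, abs_of_nonpos (by linarith), neg_sub]; ring
  · rw [min_eq_right h, abs_of_nonneg (by linarith)]; ring

/-- When every point is a lattice point, `m` maps `|u|` to `|m u|`. -/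
lemma m_abs_eq (hmono : Monotone In) (hm : IsSeqMF In m)
    (huniv : latticeSet In m = Set.univ) {u : ℕ → ℝ} (hu : u ∈ XR In) (w : W) :
    m (fun n => |u n|) w = |m u w| := by
  have hle : m (fun n => |u n|) w ≤ |m u w| := by
    have hw : w ∈ latticeSet In m := huniv ▸ Set.mem_univ w
    exact hw u hu
  have hauR : (fun n => |u n|) ∈ XR In := XR.abs hmono hu
  have h1 : m u w ≤ m (fun n => |u n|) w :=
    m_mono_of_pointwise hmono hm hu hauR (fun n => le_abs_self _) w
  have hnuR : (fun n => -u n) ∈ XR In := XR.neg hmono hu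
  have hmnu : m (fun n => -u n) w = -m u w := by
    have e : (fun n => -u n) = fun n => (0:ℝ) - u n := by funext n; ring
    rw [e, m_sub hmono hm (zero_mem_XR hmono) hu]
    simp [m_zero hmono hm]
  have h2 : -m u w ≤ m (fun n => |u n|) w := by
    rw [← hmnu]
    exact m_mono_of_pointwise hmono hm hnuR hauR (fun n => neg_le_abs _) w
  exact le_antisymm hle (abs_le.2 ⟨by linarith, h1⟩)

/-- Linear-combination evaluation. -/
lemma m_comb (hmono : Monotone In) (hm : IsSeqMF In m) {a b : ℕ → ℝ}
    (ha : a ∈ XR In) (hb : b ∈ XR In) (c d : ℝ) (w : W) :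
    m (fun n => c * a n + d * b n) w = c * m a w + d * m b w := by
  have hca : (fun n => c * a n) ∈ XR In := XR.smul hmono c ha
  have hdb : (fun n => d * b n) ∈ XR In := XR.smul hmono d hb
  have hadd := hm.2.2.2.1 _ hca _ hdb
  have e : (fun n => c * a n) + (fun n => d * b n) = fun n => c * a n + d * b n := rfl
  rw [e] at hadd
  rw [hadd]
  have hc := hm.2.2.2.2 a ha c
  have hd := hm.2.2.2.2 b hb d
  have ec : c • a = fun n => c * a n := rfl
  have ed : d • b = fun n => d * b n := rfl
  rw [ec] at hc; rw [ed] at hd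
  rw [hc, hd]
  simp

theorem main_nonempty [Nonempty ι] [Nonempty W] [CompactSpace W] [T2Space W]
    (hmono : Monotone In) (hcover : ∀ i : ι, ∃ n, i ∈ In n)
    (hm : IsSeqMF In m) (hmin : SMFMinimal In m)
    (f : C(W, ℝ)) (ε : ℝ) (hε : 0 < ε) :
    ∃ x ∈ XR In, ∀ w : W, |m x w - f w| < ε := by
  classical
  -- the lattice set must be everything
  have huniv : latticeSet In m = Set.univ := by
    by_contra hne
    exact hmin.2 (reducible_of_latticeSet_ne hmono hcover hm hne)
  -- Stone–Weierstrass
  set L : Set C(W, ℝ) := {g | ∃ z ∈ XR In, m z = g} with hL_def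
  have hne : L.Nonempty := ⟨1, (fun n => ((In n).card : ℝ)), i_mem_XR hmono, hm.2.2.1⟩
  have key : ∀ p ∈ L, ∀ q ∈ L, (p ⊔ q ∈ L) ∧ (p ⊓ q ∈ L) := by
    rintro p ⟨a, ha, rfl⟩ q ⟨b, hb, rfl⟩
    have habsR : (fun n => |a n - b n|) ∈ XR In :=
      XR.abs hmono (XR.sub hmono ha hb)
    have habR : (fun n => a n + b n) ∈ XR In := XR.add hmono ha hb
    constructor
    · refine ⟨fun n => 2⁻¹ * (a n + b n) + 2⁻¹ * |a n - b n|, ?_, ?_⟩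
      · exact XR.add hmono (XR.smul hmono 2⁻¹ habR) (XR.smul hmono 2⁻¹ habsR)
      · ext w
        rw [m_comb hmono hm habR habsR 2⁻¹ 2⁻¹ w]
        have h1 : m (fun n => a n + b n) w = m a w + m b w := by
          have := hm.2.2.2.1 a ha b hb
          have e : a + b = fun n => a n + b n := rfl
          rw [e] at this
          rw [this]; simp
        have h2 : m (fun n => |a n - b n|) w = |m a w - m b w| := by
          rw [m_abs_eq hmono hm huniv (XR.sub hmono ha hb) w,
            m_sub hmono hm ha hb]
          simp
        rw [h1, h2, ContinuousMap.sup_apply]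
        rw [real_max_eq (m a w) (m b w)]
        ring
    · refine ⟨fun n => 2⁻¹ * (a n + b n) + (-2⁻¹) * |a n - b n|, ?_, ?_⟩
      · exact XR.add hmono (XR.smul hmono 2⁻¹ habR) (XR.smul hmono (-2⁻¹) habsR)
      · ext w
        rw [m_comb hmono hm habR habsR 2⁻¹ (-2⁻¹) w]
        have h1 : m (fun n => a n + b n) w = m a w + m b w := by
          have := hm.2.2.2.1 a ha b hb
          have e : a + b = fun n => a n + b n := rfl
          rw [e] at this
          rw [this]; simp
        have h2 : m (fun n => |a n - b n|) w = |m a w - m b w| := by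
          rw [m_abs_eq hmono hm huniv (XR.sub hmono ha hb) w,
            m_sub hmono hm ha hb]
          simp
        rw [h1, h2, ContinuousMap.inf_apply]
        rw [real_min_eq (m a w) (m b w)]
        ring
  have hsep : L.SeparatesPointsStrongly := by
    intro v x y
    by_cases hxy : x = y
    · subst hxy
      refine ⟨m (fun n => v x * ((In n).card : ℝ)), ⟨_, ci_mem_XR hmono (v x), rfl⟩, ?_, ?_⟩
      all_goals
        rw [m_ci hm hmono (v x)]
        simp
    · obtain ⟨p, hp, hpxy⟩ := hmin.1 x y hxy
      set α : ℝ := (v x - v y) / (m p x - m p y) with hα_def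
      set β : ℝ := v x - α * m p x with hβ_def
      have hiR : (fun n => ((In n).card : ℝ)) ∈ XR In := i_mem_XR hmono
      refine ⟨m (fun n => α * p n + β * ((In n).card : ℝ)),
        ⟨_, XR.add hmono (XR.smul hmono α hp) (XR.smul hmono β hiR), rfl⟩, ?_, ?_⟩
      · rw [m_comb hmono hm hp hiR α β x]
        have : m (fun n => ((In n).card : ℝ)) x = 1 := by rw [hm.2.2.1]; rfl
        rw [this, hβ_def]
        ring
      · rw [m_comb hmono hm hp hiR α β y]
        have : m (fun n => ((In n).card : ℝ)) y = 1 := by rw [hm.2.2.1]; rfl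
        rw [this, hβ_def, hα_def]
        have hne0 : m p x - m p y ≠ 0 := sub_ne_zero_of_ne hpxy
        field_simp
        ring
  have hclosure : closure L = ⊤ :=
    ContinuousMap.sublattice_closure_eq_top L hne
      (fun p hp q hq => (key p hp q hq).2) (fun p hp q hq => (key p hp q hq).1) hsep
  have hf : f ∈ closure L := by rw [hclosure]; trivial
  obtain ⟨g, hgL, hdist⟩ := Metric.mem_closure_iff.1 hf ε hε
  obtain ⟨z, hz, rfl⟩ := hgL
  refine ⟨z, hz, fun w => ?_⟩
  have h1 : dist (f w) (m z w) ≤ dist f (m z) := ContinuousMap.dist_apply_le_dist w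
  have h2 : |m z w - f w| = dist (f w) (m z w) := by
    rw [Real.dist_eq, abs_sub_comm]
  rw [h2]
  exact lt_of_le_of_lt h1 hdist

end Stmt13Aux
/-- Density of range: for a minimal sequence measure function `m`, the
range of `m` is uniformly dense in `C(W, ℝ)`: for every continuous `f : W → ℝ` and
`ε > 0` there is `x ∈ X^ℝ` with `sup_w |m x w − f w| < ε`. -/
theorem stmt13 {ι : Type*} [Countable ι] [Infinite ι]
    (In : ℕ → Finset ι) (hmono : Monotone In) (hcover : ∀ i : ι, ∃ n, i ∈ In n)
    {W : Type*} [TopologicalSpace W] [CompactSpace W] [T2Space W]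
    (m : (ℕ → ℝ) → C(W, ℝ)) (hm : IsSeqMF In m) (hmin : SMFMinimal In m)
    (f : C(W, ℝ)) (ε : ℝ) (hε : 0 < ε) :
    ∃ x ∈ XR In, ∀ w : W, |m x w - f w| < ε := by
  classical
  cases isEmpty_or_nonempty W with
  | inl hW =>
    exact ⟨fun _ => 0, Stmt13Aux.zero_mem_XR hmono, fun w => (hW.false w).elim⟩
  | inr hW =>
    exact Stmt13Aux.main_nonempty hmono hcover hm hmin f ε hε

end
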